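/- Let q, a ∈ ℂ with q ≠ 0, qⁿ ≠ 1 for nonzero n. Then lim_{a→0} aⁿ H_n((2a)^{−1} x; a | q) = xⁿ, where H_n(½x; a | q) = a^{−n} ₃φ₂(q^{−n}, az, a z^{−1}; 0, 0; q, q) with x = z + z^{−1} is the continuous big q-Hermite polynomial. -/

import Mathlib

open Finset Filter

/-- q-shifted factorial (a;q)_k -/
noncomputable def qPoch (a q : ℂ) (k : ℕ) : ℂ := ∏ i ∈ range k, (1 - a * q ^ i)

/-- continuous big q-Hermite polynomial H_n(x/2; a | q) as a function of x = z + z⁻¹,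
via the ₃φ₂ representation with both lower parameters 0, where
(az;q)_k (az⁻¹;q)_k = ∏_{i<k} (1 - a q^i x + a² q^{2i}). -/
noncomputable def bigqHermite (q a : ℂ) (n : ℕ) (x : ℂ) : ℂ :=
  (a⁻¹) ^ n *
  ∑ k ∈ range (n + 1),
    qPoch (q ^ (-(n : ℤ))) q k / qPoch q q k *
    (∏ i ∈ range k, (1 - a * q ^ i * x + a ^ 2 * q ^ (2 * i))) * q ^ k

lemma qPoch_zero (a q : ℂ) : qPoch a q 0 = 1 := by simp [qPoch]

lemma qPoch_succ (a q : ℂ) (k : ℕ) : qPoch a q (k+1) = qPoch a q k * (1 - a * q ^ k) :=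
  Finset.prod_range_succ _ _

lemma qPoch_succ' (a q : ℂ) (k : ℕ) : qPoch a q (k+1) = (1 - a) * qPoch (a*q) q k := by
  rw [qPoch, Finset.prod_range_succ']
  simp only [pow_zero, mul_one, qPoch]
  rw [mul_comm]
  congr 1
  apply Finset.prod_congr rfl
  intro i _
  ring

noncomputable def Acoef (q : ℂ) (n k : ℕ) : ℂ :=
  q ^ k * qPoch (q ^ (-(n:ℤ))) q k / qPoch q q k

lemma qq_ne (q : ℂ) (hq1 : ∀ n : ℤ, n ≠ 0 → q ^ n ≠ 1) (k : ℕ) : qPoch q q k ≠ 0 := by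
  rw [qPoch]
  apply Finset.prod_ne_zero_iff.mpr
  intro i _
  intro hc
  apply hq1 ((i:ℤ)+1) (by omega)
  rw [show ((i:ℤ)+1) = ((i+1 : ℕ) : ℤ) by push_cast; ring, zpow_natCast, pow_succ']
  linear_combination -hc

lemma one_sub_pow_ne (q : ℂ) (hq1 : ∀ n : ℤ, n ≠ 0 → q ^ n ≠ 1) (k : ℕ) :
    (1 : ℂ) - q ^ (k+1) ≠ 0 := by
  intro hc
  apply hq1 ((k:ℤ)+1) (by omega)
  rw [show ((k:ℤ)+1) = ((k+1 : ℕ) : ℤ) by push_cast; ring, zpow_natCast]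
  linear_combination -hc

lemma Acoef_zero (q : ℂ) (n : ℕ) : Acoef q n 0 = 1 := by
  simp [Acoef, qPoch]

lemma Acoef_top (q : ℂ) (hq : q ≠ 0) (n : ℕ) : Acoef q n (n+1) = 0 := by
  have h : qPoch (q ^ (-(n:ℤ))) q (n+1) = 0 := by
    rw [qPoch]
    apply Finset.prod_eq_zero (Finset.self_mem_range_succ n)
    have h1 : q ^ (-(n:ℤ)) * q ^ n = 1 := by
      rw [← zpow_natCast q n, ← zpow_add₀ hq]; simp
    rw [h1]; ring
  rw [Acoef, h]; simp

lemma key_poch (q : ℂ) (hq : q ≠ 0) (p : ℂ) (k : ℕ) :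
    q ^ (k+1) * qPoch (p * q⁻¹) q (k+1)
      = qPoch p q (k+1) - qPoch p q k * (1 - q ^ (k+1)) := by
  rw [qPoch_succ', qPoch_succ, show p * q⁻¹ * q = p by field_simp]
  field_simp
  ring

lemma Acoef_rec (q : ℂ) (hq : q ≠ 0) (hq1 : ∀ n : ℤ, n ≠ 0 → q ^ n ≠ 1) (n k : ℕ) :
    Acoef q (n+1) (k+1) = Acoef q n (k+1) * (q⁻¹) ^ (k+1) - Acoef q n k * (q⁻¹) ^ k := by
  have hp : q ^ (-(((n:ℕ)+1:ℕ)):ℤ) = q ^ (-(n:ℤ)) * q⁻¹ := by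
    rw [← zpow_neg_one, ← zpow_add₀ hq]
    congr 1
    push_cast
    ring
  have hRk := qq_ne q hq1 k
  have hR1 := one_sub_pow_ne q hq1 k
  have hRsucc : qPoch q q (k+1) = qPoch q q k * (1 - q ^ (k+1)) := by
    rw [qPoch_succ, pow_succ']
  have hk := key_poch q hq (q ^ (-(n:ℤ))) k
  rw [Acoef, Acoef, Acoef]
  push_cast at hp ⊢
  rw [hp, hk, hRsucc]
  field_simp
  have e1 : q * q⁻¹ = 1 := mul_inv_cancel₀ hq
  have e2 : q ^ k * q⁻¹ ^ k = 1 := by rw [← mul_pow, e1, one_pow]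
  linear_combination (-(qPoch (q ^ (-(n:ℤ))) q (k+1)) * q ^ k * q⁻¹ ^ k) * e1 + (-(qPoch (q ^ (-(n:ℤ))) q (k+1)) - qPoch (q ^ (-(n:ℤ))) q k * q * q ^ k + qPoch (q ^ (-(n:ℤ))) q k) * e2

lemma key_identity (q : ℂ) (hq : q ≠ 0) (hq1 : ∀ n : ℤ, n ≠ 0 → q ^ n ≠ 1)
    (n : ℕ) (x : ℂ) :
    ∑ k ∈ range (n+1), Acoef q n k * qPoch x q k = x ^ n := by
  induction n with
  | zero => simp [Acoef, qPoch]
  | succ n ih =>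
    have hx : ∀ k : ℕ, x * qPoch x q k
        = (q⁻¹) ^ k * qPoch x q k - (q⁻¹) ^ k * qPoch x q (k+1) := by
      intro k
      rw [qPoch_succ]
      have h1 : (q⁻¹ : ℂ) ^ k * q ^ k = 1 := by
        rw [← mul_pow, inv_mul_cancel₀ hq, one_pow]
      linear_combination (-(qPoch x q k) * x) * h1
    set G : ℕ → ℂ := fun k => Acoef q n k * (q⁻¹) ^ k * qPoch x q k with hG
    set H : ℕ → ℂ := fun k => Acoef q n k * (q⁻¹) ^ k * qPoch x q (k+1) with hH
    have hsum : ∑ k ∈ range (n+1), G (k+1)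
        = ∑ k ∈ range (n+1), G k + G (n+1) - G 0 := by
      have h1 := Finset.sum_range_succ' G (n+1)
      have h2 := Finset.sum_range_succ G (n+1)
      linear_combination h2 - h1
    have hGtop : G (n+1) = 0 := by
      simp [hG, Acoef_top q hq n]
    have hG0 : G 0 = 1 := by
      simp [hG, Acoef_zero, qPoch_zero]
    calc ∑ k ∈ range (n+1+1), Acoef q (n+1) k * qPoch x q k
        = (∑ k ∈ range (n+1), (G (k+1) - H k)) + 1 := by
          rw [Finset.sum_range_succ']
          congr 1
          · apply Finset.sum_congr rfl
            intro k _
            rw [Acoef_rec q hq hq1 n k, hG, hH]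
            ring
          · simp [Acoef_zero, qPoch_zero]
      _ = (∑ k ∈ range (n+1), G (k+1)) - (∑ k ∈ range (n+1), H k) + 1 := by
          rw [Finset.sum_sub_distrib]
      _ = (∑ k ∈ range (n+1), G k) - (∑ k ∈ range (n+1), H k) := by
          rw [hsum, hGtop, hG0]; ring
      _ = ∑ k ∈ range (n+1), (G k - H k) := (Finset.sum_sub_distrib _ _).symm
      _ = x * ∑ k ∈ range (n+1), Acoef q n k * qPoch x q k := by
          rw [Finset.mul_sum]
          apply Finset.sum_congr rfl
          intro k _
          rw [hG, hH]
          linear_combination -(Acoef q n k) * (hx k)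
      _ = x ^ (n+1) := by rw [ih]; ring

theorem bigqHermite_to_monomial (q : ℂ)
    (hq : q ≠ 0) (hq1 : ∀ n : ℤ, n ≠ 0 → q ^ n ≠ 1)
    (n : ℕ) (x : ℂ) :
    Tendsto (fun a : ℂ => a ^ n * bigqHermite q a n (a⁻¹ * x))
      (nhdsWithin 0 {0}ᶜ) (nhds (x ^ n)) := by
  set f : ℂ → ℂ := fun a => ∑ k ∈ range (n+1),
    qPoch (q ^ (-(n:ℤ))) q k / qPoch q q k *
    (∏ i ∈ range k, (1 - q ^ i * x + a ^ 2 * q ^ (2*i))) * q ^ k with hf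
  have hcont : Continuous f := by
    apply continuous_finset_sum
    intro k _
    apply Continuous.mul _ continuous_const
    apply Continuous.mul continuous_const
    apply continuous_finset_prod
    intro i _
    fun_prop
  have hf0 : f 0 = x ^ n := by
    rw [hf, ← key_identity q hq hq1 n x]
    apply Finset.sum_congr rfl
    intro k _
    have hprod : ∏ i ∈ range k, (1 - q ^ i * x + (0:ℂ) ^ 2 * q ^ (2*i))
        = qPoch x q k := by
      rw [qPoch]
      apply Finset.prod_congr rfl
      intro i _
      ring
    rw [Acoef]
    simp only [hprod]
    ring
  have heq : ∀ a : ℂ, a ≠ 0 → a ^ n * bigqHermite q a n (a⁻¹ * x) = f a := by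
    intro a ha
    rw [bigqHermite, ← mul_assoc, ← mul_pow, mul_inv_cancel₀ ha, one_pow, one_mul]
    apply Finset.sum_congr rfl
    intro k _
    congr 2
    apply Finset.prod_congr rfl
    intro i _
    rw [show a * q ^ i * (a⁻¹ * x) = (a * a⁻¹) * (q ^ i * x) by ring, mul_inv_cancel₀ ha,
      one_mul]
  have htend : Tendsto f (nhdsWithin 0 {0}ᶜ) (nhds (x ^ n)) := by
    rw [← hf0]
    exact (hcont.tendsto 0).mono_left nhdsWithin_le_nhds
  have hev : f =ᶠ[nhdsWithin 0 {0}ᶜ] fun a : ℂ => a ^ n * bigqHermite q a n (a⁻¹ * x) := by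
    filter_upwards [self_mem_nhdsWithin] with a ha
    exact (heq a ha).symm
  exact htend.congr' hev
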